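/- Let F be a field, let k ≥ 2 be an integer, and let ω ∈ F satisfy ω^k = 1 and ω ≠ 1. If t is an upper triangular F-linear endomorphism of ℕ →₀ F with t_{nn} = 2ω for all n, then t is a sum of four (k+1)-potent F-linear endomorphisms of ℕ →₀ F. -/

import Mathlib

set_option maxHeartbeats 1000000

open Finsupp LinearMap

namespace UT4

variable {F : Type*} [Field F]

noncomputable def dv (x : Module.End F (ℕ →₀ F)) (n : ℕ) : ℕ →₀ F :=
  x (Finsupp.single (n + 1) 1) - Finsupp.single n 1

noncomputable def rv (x : Module.End F (ℕ →₀ F))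
    (hx : ∀ n, (dv x n).support ⊆ Finset.range n) : ℕ → (ℕ →₀ F)
  | i =>
    Finsupp.single (i + 1) 1 -
      ((dv x i).support.attach.sum fun m => (dv x i) m.1 • rv x hx m.1)
  termination_by i => i
  decreasing_by exact Finset.mem_range.mp (hx i m.2)

variable (x : Module.End F (ℕ →₀ F))
  (hx : ∀ n, (dv x n).support ⊆ Finset.range n)

lemma x_rv (i : ℕ) : x (rv x hx i) = Finsupp.single i 1 := by
  induction i using Nat.strong_induction_on with
  | _ i ih =>
    rw [rv, map_sub]
    have h1 : x ((dv x i).support.attach.sum fun m => (dv x i) m.1 • rv x hx m.1)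
        = (dv x i).support.attach.sum fun m => (dv x i) m.1 • Finsupp.single m.1 (1:F) := by
      rw [map_sum]
      refine Finset.sum_congr rfl fun m _ => ?_
      rw [map_smul, ih m.1 (Finset.mem_range.mp (hx i m.2))]
    have h2 : ((dv x i).support.attach.sum fun m => (dv x i) m.1 • Finsupp.single m.1 (1:F))
        = dv x i := by
      rw [Finset.sum_attach _ (fun m => (dv x i) m • Finsupp.single m (1:F))]
      conv_rhs => rw [← Finsupp.sum_single (dv x i)]
      rw [Finsupp.sum]
      exact Finset.sum_congr rfl fun m _ => by
        rw [Finsupp.smul_single, smul_eq_mul, mul_one]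
    rw [h1, h2, dv, sub_sub_cancel]

noncomputable def RR : Module.End F (ℕ →₀ F) :=
  Finsupp.lsum F fun i => LinearMap.toSpanSingleton F (ℕ →₀ F) (rv x hx i)

lemma x_RR : x * RR x hx = 1 := by
  apply Finsupp.lhom_ext
  intro n b
  rw [Module.End.mul_apply, RR, Finsupp.lsum_single, LinearMap.toSpanSingleton_apply,
    map_smul, x_rv, Module.End.one_apply, Finsupp.smul_single, smul_eq_mul, mul_one]


lemma sub_mul' (a b c : Module.End F (ℕ →₀ F)) : (a - b) * c = a * c - b * c :=
  sub_mul a b c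

lemma mul_sub' (a b c : Module.End F (ℕ →₀ F)) : a * (b - c) = a * b - a * c :=
  mul_sub a b c

noncomputable def QQ : Module.End F (ℕ →₀ F) := RR x hx * x

lemma canc1 (a : Module.End F (ℕ →₀ F)) : x * (RR x hx * a) = a := by
  rw [← mul_assoc, x_RR, one_mul]

lemma canc_pow (i : ℕ) (a : Module.End F (ℕ →₀ F)) :
    x ^ i * ((RR x hx) ^ i * a) = a := by
  induction i with
  | zero => simp
  | succ n ih =>
    rw [pow_succ x, pow_succ' (RR x hx), mul_assoc (RR x hx), mul_assoc (x ^ n),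
      canc1, ih]

lemma QQ_R (a : Module.End F (ℕ →₀ F)) : QQ x hx * (RR x hx * a) = RR x hx * a := by
  rw [QQ, mul_assoc, canc1]

lemma oneQ_R_zero (a : Module.End F (ℕ →₀ F)) :
    (1 - QQ x hx) * (RR x hx * a) = 0 := by
  rw [sub_mul', one_mul, QQ_R]
  abel

lemma x_oneQ : x * (1 - QQ x hx) = 0 := by
  rw [mul_sub', mul_one, QQ, ← mul_assoc, x_RR, one_mul]
  abel

lemma x_oneQ' (a : Module.End F (ℕ →₀ F)) : x * ((1 - QQ x hx) * a) = 0 := by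
  rw [← mul_assoc, x_oneQ, zero_mul]

lemma xpow_oneQ' (d : ℕ) (a : Module.End F (ℕ →₀ F)) :
    x ^ (d + 1) * ((1 - QQ x hx) * a) = 0 := by
  rw [pow_succ, mul_assoc, x_oneQ', mul_zero]

lemma oneQ_idem : (1 - QQ x hx) * (1 - QQ x hx) = 1 - QQ x hx := by
  have h : QQ x hx * QQ x hx = QQ x hx := by
    rw [QQ, mul_assoc, canc1]
  rw [mul_sub', mul_one, sub_mul', one_mul, h]
  abel

noncomputable def pp (i : ℕ) : Module.End F (ℕ →₀ F) :=
  (RR x hx) ^ i * ((1 - QQ x hx) * x ^ i)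

lemma x_pp_zero : x * pp x hx 0 = 0 := by
  rw [pp]
  simp only [pow_zero, one_mul, mul_one]
  exact x_oneQ x hx

lemma x_pp_succ (i : ℕ) : x * pp x hx (i + 1) = pp x hx i * x := by
  rw [pp, pp, pow_succ' (RR x hx), mul_assoc, canc1, mul_assoc, mul_assoc, ← pow_succ]

lemma xpow_pp (i : ℕ) : x ^ (i + 1) * pp x hx i = 0 := by
  rw [pp, pow_succ' x, mul_assoc, canc_pow, x_oneQ']

lemma pp_idem (i : ℕ) : pp x hx i * pp x hx i = pp x hx i := by
  rw [pp, mul_assoc, mul_assoc, canc_pow, ← mul_assoc (1 - QQ x hx), oneQ_idem]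

lemma pp_mul_ne {i j : ℕ} (hij : i ≠ j) : pp x hx i * pp x hx j = 0 := by
  rcases Nat.lt_or_ge i j with h | h
  · obtain ⟨d, rfl⟩ : ∃ d, j = i + (d + 1) := ⟨j - i - 1, by omega⟩
    rw [pp, pp, mul_assoc, mul_assoc, pow_add, mul_assoc, canc_pow,
      pow_succ' (RR x hx), mul_assoc, oneQ_R_zero, mul_zero]
  · obtain ⟨d, rfl⟩ : ∃ d, i = j + (d + 1) := ⟨i - j - 1, by omega⟩
    rw [pp, pp, mul_assoc, mul_assoc]
    have : x ^ (j + (d + 1)) * ((RR x hx) ^ j * ((1 - QQ x hx) * x ^ j)) = 0 := by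
      rw [add_comm j, pow_add, mul_assoc, canc_pow, xpow_oneQ']
    rw [this, mul_zero, mul_zero]

lemma psum (m : ℕ) :
    (Finset.range m).sum (pp x hx) = 1 - (RR x hx) ^ m * x ^ m := by
  induction m with
  | zero => simp only [Finset.range_zero, Finset.sum_empty, pow_zero, one_mul]; abel
  | succ n ih =>
    rw [Finset.sum_range_succ, ih, pp]
    have key : (RR x hx) ^ n * ((1 - QQ x hx) * x ^ n)
        = (RR x hx) ^ n * x ^ n - (RR x hx) ^ (n + 1) * x ^ (n + 1) := by
      rw [sub_mul', one_mul, mul_sub']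
      congr 1
      rw [QQ, mul_assoc, ← pow_succ' x, ← mul_assoc, ← pow_succ]
    rw [key]
    abel


variable (hx0 : x (Finsupp.single 0 1) = 0)

include hx hx0 in
lemma xsupp (m : ℕ) : (x (Finsupp.single m (1:F))).support ⊆ Finset.range m := by
  cases m with
  | zero => rw [hx0]; simp
  | succ l =>
    have hd : x (Finsupp.single (l+1) (1:F)) = dv x l + Finsupp.single l 1 := by
      rw [dv, sub_add_cancel]
    rw [hd]
    refine subset_trans Finsupp.support_add ?_
    apply Finset.union_subset
    · exact subset_trans (hx l) (Finset.range_subset_range.mpr (Nat.le_succ l))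
    · refine subset_trans Finsupp.support_single_subset ?_
      simp
  
include hx hx0 in
lemma supp_step {n : ℕ} {v : ℕ →₀ F} (hv : v.support ⊆ Finset.range (n+1)) :
    (x v).support ⊆ Finset.range n := by
  have hv' : x v = v.sum fun m c => c • x (Finsupp.single m 1) := by
    conv_lhs => rw [← Finsupp.sum_single v]
    rw [map_finsuppSum]
    refine Finsupp.sum_congr fun m _ => ?_
    rw [show Finsupp.single m (v m) = (v m) • Finsupp.single m (1:F) by
      rw [Finsupp.smul_single, smul_eq_mul, mul_one], map_smul]
  rw [hv']
  refine subset_trans Finsupp.support_sum ?_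
  intro i hi
  rw [Finset.mem_biUnion] at hi
  obtain ⟨m, hm, hi⟩ := hi
  have h1 : i ∈ (x (Finsupp.single m (1:F))).support :=
    Finsupp.support_smul hi
  have h2 := Finset.mem_range.mp (xsupp x hx hx0 m h1)
  have h3 := Finset.mem_range.mp (hv hm)
  exact Finset.mem_range.mpr (by omega)

include hx hx0 in
lemma xpow_nil : ∀ (n : ℕ) (v : ℕ →₀ F), v.support ⊆ Finset.range n → (x^n) v = 0 := by
  intro n
  induction n with
  | zero =>
    intro v hv
    have : v = 0 := by
      rw [← Finsupp.support_eq_empty]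
      simpa using hv
    rw [this, map_zero]
  | succ n ih =>
    intro v hv
    rw [pow_succ, Module.End.mul_apply]
    exact ih _ (supp_step x hx hx0 hv)

lemma pow_nil_mono {v : ℕ →₀ F} {n m : ℕ} (h : (x^n) v = 0) (hnm : n ≤ m) :
    (x^m) v = 0 := by
  obtain ⟨d, rfl⟩ : ∃ d, m = d + n := ⟨m - n, by omega⟩
  rw [pow_add, Module.End.mul_apply, h, map_zero]

include hx hx0 in
lemma exists_pow_nil (v : ℕ →₀ F) : ∃ n, (x^n) v = 0 := by
  refine ⟨v.support.sup id + 1, xpow_nil x hx hx0 _ v fun i hi => ?_⟩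
  have h := Finset.le_sup (f := id) hi
  simp only [id_eq] at h
  exact Finset.mem_range.mpr (by omega)

noncomputable def hsum (m : ℕ) : Module.End F (ℕ →₀ F) :=
  ((Finset.range m).filter (fun i => Even i)).sum (pp x hx)

noncomputable def osum (m : ℕ) : Module.End F (ℕ →₀ F) :=
  ((Finset.range m).filter (fun i => ¬ Even i)).sum (pp x hx)

noncomputable def hh : Module.End F (ℕ →₀ F) :=
  Finsupp.lsum F fun n =>
    LinearMap.toSpanSingleton F (ℕ →₀ F) (hsum x hx (n+1) (Finsupp.single n 1))

lemma pp_apply_nil {v : ℕ →₀ F} {n : ℕ} (hv : (x^n) v = 0) {i : ℕ} (hni : n ≤ i) :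
    pp x hx i v = 0 := by
  rw [pp, Module.End.mul_apply, Module.End.mul_apply, pow_nil_mono x hv hni,
    map_zero, map_zero]

lemma hsum_stab {v : ℕ →₀ F} {n m : ℕ} (hv : (x^n) v = 0) (hnm : n ≤ m) :
    hsum x hx m v = hsum x hx n v := by
  rw [hsum, hsum, LinearMap.sum_apply, LinearMap.sum_apply]
  refine (Finset.sum_subset
    (Finset.filter_subset_filter _ (Finset.range_subset_range.mpr hnm)) ?_).symm
  intro i hi hni
  simp only [Finset.mem_filter, Finset.mem_range] at hi hni
  refine pp_apply_nil x hx hv ?_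
  by_contra hcon
  exact hni ⟨by omega, hi.2⟩

include hx0 in
lemma hh_eq_aux (v : ℕ →₀ F) : ∃ m, (x^m) v = 0 ∧ hh x hx v = hsum x hx m v := by
  induction v using Finsupp.induction_linear with
  | zero => exact ⟨0, by simp, by simp⟩
  | add f g hf hg =>
    obtain ⟨m1, h1, e1⟩ := hf
    obtain ⟨m2, h2, e2⟩ := hg
    refine ⟨max m1 m2, ?_, ?_⟩
    · rw [map_add, pow_nil_mono x h1 (le_max_left _ _),
        pow_nil_mono x h2 (le_max_right _ _), add_zero]
    · rw [map_add, e1, e2,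
        ← hsum_stab x hx h1 (le_max_left m1 m2),
        ← hsum_stab x hx h2 (le_max_right m1 m2), map_add]
  | single a b =>
    refine ⟨a + 1, ?_, ?_⟩
    · refine xpow_nil x hx hx0 _ _ (subset_trans Finsupp.support_single_subset ?_)
      simp
    · rw [hh, Finsupp.lsum_single, LinearMap.toSpanSingleton_apply, ← map_smul,
        Finsupp.smul_single, smul_eq_mul, mul_one]

include hx0 in
lemma hh_eq {v : ℕ →₀ F} {n : ℕ} (hv : (x^n) v = 0) : hh x hx v = hsum x hx n v := by
  obtain ⟨m, hm, e⟩ := hh_eq_aux x hx hx0 v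
  rw [e, ← hsum_stab x hx hm (le_max_left m n), hsum_stab x hx hv (le_max_right m n)]

lemma psum_apply {v : ℕ →₀ F} {n : ℕ} (hv : (x^n) v = 0) :
    ((Finset.range n).sum (pp x hx)) v = v := by
  rw [psum]
  rw [LinearMap.sub_apply, Module.End.one_apply, Module.End.mul_apply, hv, map_zero,
    sub_zero]

lemma hsum_osum (n : ℕ) :
    hsum x hx n + osum x hx n = (Finset.range n).sum (pp x hx) := by
  rw [hsum, osum]
  exact Finset.sum_filter_add_sum_filter_not _ _ _

include hx0 in
lemma oneh_eq {v : ℕ →₀ F} {n : ℕ} (hv : (x^n) v = 0) :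
    v - hh x hx v = osum x hx n v := by
  rw [hh_eq x hx hx0 hv]
  have hsplit : hsum x hx n v + osum x hx n v = v := by
    rw [← LinearMap.add_apply, hsum_osum, psum_apply x hx hv]
  rw [sub_eq_iff_eq_add, add_comm]
  exact hsplit.symm

lemma xpow_sum_apply_nil {n : ℕ} (s : Finset ℕ) (hs : ∀ i ∈ s, i < n) (v : ℕ →₀ F) :
    (x^n) ((s.sum (pp x hx)) v) = 0 := by
  rw [LinearMap.sum_apply, map_sum]
  refine Finset.sum_eq_zero fun i hi => ?_
  have hin := hs i hi
  obtain ⟨d, rfl⟩ : ∃ d, n = d + (i + 1) := ⟨n - (i+1), by omega⟩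
  have : (x ^ (d + (i+1))) (pp x hx i v)
      = (x ^ d) ((x ^ (i+1) * pp x hx i) v) := by
    rw [pow_add, Module.End.mul_apply, Module.End.mul_apply]
  rw [this, xpow_pp, LinearMap.zero_apply, map_zero]

lemma ppxpp_even {j i : ℕ} (hj : Even j) (hi : Even i) :
    pp x hx j * (x * pp x hx i) = 0 := by
  cases i with
  | zero => rw [x_pp_zero, mul_zero]
  | succ i' =>
    have hji : j ≠ i' := by
      intro h; subst h
      exact (Nat.even_add_one.mp hi) hj
    rw [x_pp_succ, ← mul_assoc, pp_mul_ne x hx hji, zero_mul]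

lemma ppxpp_odd {j i : ℕ} (hj : ¬ Even j) (hi : ¬ Even i) :
    pp x hx j * (x * pp x hx i) = 0 := by
  cases i with
  | zero => exact absurd Even.zero hi
  | succ i' =>
    have hji : j ≠ i' := by
      intro h; subst h
      exact hi (Nat.even_add_one.mpr hj)
    rw [x_pp_succ, ← mul_assoc, pp_mul_ne x hx hji, zero_mul]

include hx0 in
lemma hh_idem : hh x hx * hh x hx = hh x hx := by
  apply LinearMap.ext; intro v
  obtain ⟨n, hn⟩ := exists_pow_nil x hx hx0 v
  have hz : (x^n) (hsum x hx n v) = 0 := by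
    simp only [hsum]
    exact xpow_sum_apply_nil x hx _
      (fun i hi => Finset.mem_range.mp (Finset.mem_filter.mp hi).1) v
  rw [Module.End.mul_apply, hh_eq x hx hx0 hn, hh_eq x hx hx0 hz]
  simp only [hsum, LinearMap.sum_apply, map_sum]
  refine Finset.sum_congr rfl fun j hj => ?_
  have hvan : ∀ i ∈ (Finset.range n).filter (fun i => Even i), i ≠ j →
      pp x hx i (pp x hx j v) = 0 := fun i _ hij => by
    rw [show pp x hx i (pp x hx j v) = (pp x hx i * pp x hx j) v from rfl,
      pp_mul_ne x hx hij, LinearMap.zero_apply]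
  rw [Finset.sum_eq_single_of_mem j hj hvan,
    show pp x hx j (pp x hx j v) = (pp x hx j * pp x hx j) v from rfl, pp_idem]

include hx0 in
lemma hxh : hh x hx * x * hh x hx = 0 := by
  apply LinearMap.ext; intro v
  obtain ⟨n, hn⟩ := exists_pow_nil x hx hx0 v
  have hz : (x^n) (hsum x hx n v) = 0 := by
    simp only [hsum]
    exact xpow_sum_apply_nil x hx _
      (fun i hi => Finset.mem_range.mp (Finset.mem_filter.mp hi).1) v
  have hw : (x^n) (x (hsum x hx n v)) = 0 := by
    rw [show (x^n) (x (hsum x hx n v)) = (x^n * x) (hsum x hx n v) from rfl,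
      ← pow_succ, pow_succ', Module.End.mul_apply, hz, map_zero]
  rw [Module.End.mul_apply, Module.End.mul_apply, LinearMap.zero_apply,
    hh_eq x hx hx0 hn, hh_eq x hx hx0 hw]
  simp only [hsum, LinearMap.sum_apply, map_sum]
  refine Finset.sum_eq_zero fun j hj => ?_
  refine Finset.sum_eq_zero fun i hi => ?_
  rw [show pp x hx i (x (pp x hx j v)) = (pp x hx i * (x * pp x hx j)) v from rfl,
    ppxpp_even x hx (Finset.mem_filter.mp hi).2 (Finset.mem_filter.mp hj).2,
    LinearMap.zero_apply]

include hx0 in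
lemma oxo : (1 - hh x hx) * x * (1 - hh x hx) = 0 := by
  apply LinearMap.ext; intro v
  obtain ⟨n, hn⟩ := exists_pow_nil x hx hx0 v
  have e1 : (1 - hh x hx) v = osum x hx n v := by
    rw [LinearMap.sub_apply, Module.End.one_apply, oneh_eq x hx hx0 hn]
  have hz : (x^n) (osum x hx n v) = 0 := by
    simp only [osum]
    exact xpow_sum_apply_nil x hx _
      (fun i hi => Finset.mem_range.mp (Finset.mem_filter.mp hi).1) v
  have hw : (x^n) (x (osum x hx n v)) = 0 := by
    rw [show (x^n) (x (osum x hx n v)) = (x^n * x) (osum x hx n v) from rfl,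
      ← pow_succ, pow_succ', Module.End.mul_apply, hz, map_zero]
  rw [Module.End.mul_apply, Module.End.mul_apply, LinearMap.zero_apply, e1]
  have e2 : (1 - hh x hx) (x (osum x hx n v)) = osum x hx n (x (osum x hx n v)) := by
    rw [LinearMap.sub_apply, Module.End.one_apply, oneh_eq x hx hx0 hw]
  rw [e2]
  simp only [osum, LinearMap.sum_apply, map_sum]
  refine Finset.sum_eq_zero fun j hj => ?_
  refine Finset.sum_eq_zero fun i hi => ?_
  rw [show pp x hx i (x (pp x hx j v)) = (pp x hx i * (x * pp x hx j)) v from rfl,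
    ppxpp_odd x hx (Finset.mem_filter.mp hi).2 (Finset.mem_filter.mp hj).2,
    LinearMap.zero_apply]

include hx hx0 in
theorem grading : ∃ h : Module.End F (ℕ →₀ F),
    h * h = h ∧ h * x * h = 0 ∧ (1 - h) * x * (1 - h) = 0 :=
  ⟨hh x hx, hh_idem x hx hx0, hxh x hx hx0, oxo x hx hx0⟩


lemma add_mul' (a b c : Module.End F (ℕ →₀ F)) : (a + b) * c = a * c + b * c :=
  add_mul a b c

lemma mul_add' (a b c : Module.End F (ℕ →₀ F)) : a * (b + c) = a * b + a * c :=
  mul_add a b c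

noncomputable def cornerP (f M : Module.End F (ℕ →₀ F)) : Module.End F (ℕ →₀ F) :=
  f + f * M * (1 - f)

lemma one_sub_idem {f : Module.End F (ℕ →₀ F)} (hf : f * f = f) :
    (1 - f) * (1 - f) = 1 - f := by
  rw [mul_sub', mul_one, sub_mul', one_mul, hf]
  abel

lemma cornerP_idem {f : Module.End F (ℕ →₀ F)} (M : Module.End F (ℕ →₀ F))
    (hf : f * f = f) : cornerP f M * cornerP f M = cornerP f M := by
  have h0 : (1 - f) * f = 0 := by
    rw [sub_mul', one_mul, hf]; abel
  have e1 : f * (f * M * (1 - f)) = f * M * (1 - f) := by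
    rw [← mul_assoc, ← mul_assoc, hf]
  have e2 : f * M * (1 - f) * f = 0 := by
    rw [mul_assoc (f * M), h0, mul_zero]
  have e3 : f * M * (1 - f) * (f * M * (1 - f)) = 0 := by
    rw [mul_assoc (f * M), ← mul_assoc (1 - f), ← mul_assoc (1 - f), h0, zero_mul,
      zero_mul, mul_zero]
  rw [cornerP, add_mul', mul_add', mul_add', hf, e1, e2, e3]
  abel

lemma cornerP_sum {f : Module.End F (ℕ →₀ F)} (M : Module.End F (ℕ →₀ F))
    (hf : f * f = f) (h1 : f * M * f = 0) (h2 : (1 - f) * M * (1 - f) = 0) :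
    cornerP f M + cornerP (1 - f) M = 1 + M := by
  have hss : (1 : Module.End F (ℕ →₀ F)) - (1 - f) = f := by abel
  have hone : f + (1 - f) = (1 : Module.End F (ℕ →₀ F)) := by abel
  rw [cornerP, cornerP, hss]
  have eMf : f * M * f + f * M * (1 - f) = f * M := by
    calc f * M * f + f * M * (1 - f) = (f * M) * (f + (1 - f)) :=
          (mul_add' (f * M) f (1 - f)).symm
      _ = f * M := by rw [hone, mul_one]
  have e2f : (1 - f) * M * f + (1 - f) * M * (1 - f) = (1 - f) * M := by
    calc (1 - f) * M * f + (1 - f) * M * (1 - f) = ((1 - f) * M) * (f + (1 - f)) :=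
          (mul_add' ((1 - f) * M) f (1 - f)).symm
      _ = (1 - f) * M := by rw [hone, mul_one]
  have eM : f * M + (1 - f) * M = M := by
    calc f * M + (1 - f) * M = (f + (1 - f)) * M := (add_mul' f (1 - f) M).symm
      _ = M := by rw [hone, one_mul]
  have key : f * M * (1 - f) + (1 - f) * M * f = M := by
    have all : (f * M * f + f * M * (1 - f)) + ((1 - f) * M * f + (1 - f) * M * (1 - f))
        = M := by rw [eMf, e2f, eM]
    calc f * M * (1 - f) + (1 - f) * M * f
        = (f * M * f + f * M * (1 - f)) + ((1 - f) * M * f + (1 - f) * M * (1 - f)) := by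
          rw [h1, h2]; abel
      _ = M := all
  calc f + f * M * (1 - f) + ((1 - f) + (1 - f) * M * f)
      = (f + (1 - f)) + (f * M * (1 - f) + (1 - f) * M * f) := by abel
    _ = 1 + M := by rw [key, hone]

lemma idem_pow {p : Module.End F (ℕ →₀ F)} (hp : p * p = p) (n : ℕ) :
    p ^ (n + 1) = p := by
  induction n with
  | zero => rw [pow_one]
  | succ m ih => rw [pow_succ, ih, hp]

noncomputable def gP : Module.End F (ℕ →₀ F) :=
  Finsupp.lsum F fun n => if Even n then Finsupp.lsingle n else 0

noncomputable def Sh : Module.End F (ℕ →₀ F) :=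
  Finsupp.lsum F fun n =>
    match n with
    | 0 => 0
    | m + 1 => Finsupp.lsingle m

lemma gP_single (n : ℕ) :
    (gP : Module.End F (ℕ →₀ F)) (Finsupp.single n 1)
      = if Even n then Finsupp.single n 1 else 0 := by
  rw [gP, Finsupp.lsum_single]
  split_ifs with h <;> simp

lemma gP_single' (n : ℕ) (b : F) :
    (gP : Module.End F (ℕ →₀ F)) (Finsupp.single n b)
      = if Even n then Finsupp.single n b else 0 := by
  rw [show Finsupp.single n b = b • Finsupp.single n (1:F) by
    rw [Finsupp.smul_single, smul_eq_mul, mul_one], map_smul, gP_single]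
  split_ifs with h
  · rw [Finsupp.smul_single, smul_eq_mul, mul_one]
  · rw [smul_zero]

lemma Sh_single_zero : (Sh : Module.End F (ℕ →₀ F)) (Finsupp.single 0 1) = 0 := by
  rw [Sh, Finsupp.lsum_single]
  rfl

lemma Sh_single_succ (m : ℕ) :
    (Sh : Module.End F (ℕ →₀ F)) (Finsupp.single (m+1) 1) = Finsupp.single m 1 := by
  rw [Sh, Finsupp.lsum_single]
  simp

lemma gP_apply (v : ℕ →₀ F) (i : ℕ) :
    (gP : Module.End F (ℕ →₀ F)) v i = if Even i then v i else 0 := by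
  induction v using Finsupp.induction_linear with
  | zero => simp
  | add f g hf hg =>
    rw [map_add, Finsupp.add_apply, hf, hg, Finsupp.add_apply]
    split_ifs <;> simp
  | single a b =>
    rw [gP_single']
    by_cases hA : Even a <;> by_cases hI : Even i
    · simp [hA, hI]
    · have hne : a ≠ i := fun h => hI (h ▸ hA)
      simp [hA, hI, Finsupp.single_apply, hne]
    · have hne : a ≠ i := fun h => hA (h ▸ hI)
      simp [hA, hI, Finsupp.single_apply, hne]
    · simp [hA, hI]

lemma oneg_apply (v : ℕ →₀ F) (i : ℕ) :
    ((1 - gP : Module.End F (ℕ →₀ F))) v i = if Even i then 0 else v i := by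
  rw [LinearMap.sub_apply, Module.End.one_apply, Finsupp.sub_apply, gP_apply]
  split_ifs <;> simp

lemma gP_idem : (gP : Module.End F (ℕ →₀ F)) * gP = gP := by
  apply Finsupp.lhom_ext
  intro n b
  rw [Module.End.mul_apply, gP_single']
  split_ifs with h
  · rw [gP_single', if_pos h]
  · rw [map_zero]

lemma gSg : (gP : Module.End F (ℕ →₀ F)) * Sh * gP = 0 := by
  apply Finsupp.lhom_ext
  intro n b
  rw [Module.End.mul_apply, Module.End.mul_apply, LinearMap.zero_apply, gP_single']
  split_ifs with h
  · cases n with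
    | zero =>
      rw [show Finsupp.single 0 b = b • Finsupp.single 0 (1:F) by
        rw [Finsupp.smul_single, smul_eq_mul, mul_one], map_smul, map_smul,
        Sh_single_zero, map_zero, smul_zero]
    | succ m =>
      rw [show Finsupp.single (m+1) b = b • Finsupp.single (m+1) (1:F) by
        rw [Finsupp.smul_single, smul_eq_mul, mul_one], map_smul, map_smul,
        Sh_single_succ, gP_single, if_neg (by simpa [Nat.even_add_one] using h),
        smul_zero]
  · rw [map_zero, map_zero]

lemma oSo : ((1 - gP : Module.End F (ℕ →₀ F))) * Sh * (1 - gP) = 0 := by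
  apply Finsupp.lhom_ext
  intro n b
  rw [Module.End.mul_apply, Module.End.mul_apply, LinearMap.zero_apply]
  have hg1 : ((1 - gP : Module.End F (ℕ →₀ F))) (Finsupp.single n b)
      = if Even n then 0 else Finsupp.single n b := by
    rw [LinearMap.sub_apply, Module.End.one_apply, gP_single']
    split_ifs <;> simp
  rw [hg1]
  split_ifs with h
  · rw [map_zero, map_zero]
  · cases n with
    | zero => exact absurd Even.zero h
    | succ m =>
      rw [show Finsupp.single (m+1) b = b • Finsupp.single (m+1) (1:F) by
        rw [Finsupp.smul_single, smul_eq_mul, mul_one], map_smul, map_smul,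
        Sh_single_succ]
      have hm : Even m := by simpa [Nat.even_add_one] using h
      rw [show ((1 - gP : Module.End F (ℕ →₀ F))) (Finsupp.single m 1)
          = Finsupp.single m 1 - gP (Finsupp.single m 1) from rfl,
        gP_single, if_pos hm, sub_self, smul_zero]


theorem sum_four (u : Module.End F (ℕ →₀ F))
    (hu : ∀ j i : ℕ, j ≤ i → ((u - 2) (Finsupp.single j 1)) i = 0) :
    ∃ P₁ P₂ P₃ P₄ : Module.End F (ℕ →₀ F),
      P₁ * P₁ = P₁ ∧ P₂ * P₂ = P₂ ∧ P₃ * P₃ = P₃ ∧ P₄ * P₄ = P₄ ∧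
      P₁ + P₂ + P₃ + P₄ = u := by
  classical
  set N : Module.End F (ℕ →₀ F) := u - 2 with hNdef
  have hNji : ∀ j i : ℕ, j ≤ i → N (Finsupp.single j 1) i = 0 := hu
  have hNsupp : ∀ j : ℕ, (N (Finsupp.single j 1)).support ⊆ Finset.range j := by
    intro j i hi
    rw [Finset.mem_range]
    by_contra hcon
    exact (Finsupp.mem_support_iff.mp hi) (hNji j i (by omega))
  have hN0 : N (Finsupp.single 0 1) = 0 := by
    ext a
    simpa using hNji 0 a (Nat.zero_le a)
  set xx : Module.End F (ℕ →₀ F) :=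
    Sh + (gP * N * gP + (1 - gP) * N * (1 - gP)) with hxxdef
  have hg0 : (gP : Module.End F (ℕ →₀ F)) (Finsupp.single 0 1) = Finsupp.single 0 1 := by
    rw [gP_single, if_pos Even.zero]
  have ho0 : ((1 - gP : Module.End F (ℕ →₀ F))) (Finsupp.single 0 1) = 0 := by
    rw [LinearMap.sub_apply, Module.End.one_apply, hg0, sub_self]
  have hx0 : xx (Finsupp.single 0 1) = 0 := by
    rw [hxxdef, LinearMap.add_apply, LinearMap.add_apply, Module.End.mul_apply,
      Module.End.mul_apply, Module.End.mul_apply, Module.End.mul_apply, Sh_single_zero,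
      hg0, hN0, map_zero, ho0, map_zero, map_zero]
    simp
  have hxs : ∀ n, (dv xx n).support ⊆ Finset.range n := by
    intro n
    have hD : dv xx n = gP (N (gP (Finsupp.single (n+1) 1)))
        + ((1 - gP : Module.End F (ℕ →₀ F)))
          (N (((1 - gP : Module.End F (ℕ →₀ F))) (Finsupp.single (n+1) 1))) := by
      rw [dv, hxxdef, LinearMap.add_apply, LinearMap.add_apply, Module.End.mul_apply,
        Module.End.mul_apply, Module.End.mul_apply, Module.End.mul_apply, Sh_single_succ]
      abel
    rw [hD]
    intro i hi
    have hi' := Finsupp.support_add hi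
    rw [Finset.mem_union] at hi'
    rw [Finset.mem_range]
    by_cases hpar : Even (n+1)
    · have hB : ((1 - gP : Module.End F (ℕ →₀ F))) (Finsupp.single (n+1) (1:F)) = 0 := by
        rw [LinearMap.sub_apply, Module.End.one_apply, gP_single, if_pos hpar, sub_self]
      have hgA : (gP : Module.End F (ℕ →₀ F)) (Finsupp.single (n+1) (1:F))
          = Finsupp.single (n+1) 1 := by rw [gP_single, if_pos hpar]
      rcases hi' with hiA | hiB
      · rw [hgA] at hiA
        have hco := Finsupp.mem_support_iff.mp hiA
        rw [gP_apply] at hco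
        by_cases hie : Even i
        · rw [if_pos hie] at hco
          have hlt : i < n + 1 :=
            Finset.mem_range.mp (hNsupp (n+1) (Finsupp.mem_support_iff.mpr hco))
          have hne : i ≠ n := by
            intro h
            subst h
            exact (Nat.even_add_one.mp hpar) hie
          omega
        · rw [if_neg hie] at hco
          exact absurd rfl hco
      · rw [hB, map_zero, map_zero] at hiB
        simp at hiB
    · have hA : (gP : Module.End F (ℕ →₀ F)) (Finsupp.single (n+1) (1:F)) = 0 := by
        rw [gP_single, if_neg hpar]
      have hoA : ((1 - gP : Module.End F (ℕ →₀ F))) (Finsupp.single (n+1) (1:F))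
          = Finsupp.single (n+1) 1 := by
        rw [LinearMap.sub_apply, Module.End.one_apply, gP_single, if_neg hpar, sub_zero]
      rcases hi' with hiA | hiB
      · rw [hA, map_zero, map_zero] at hiA
        simp at hiA
      · rw [hoA] at hiB
        have hco := Finsupp.mem_support_iff.mp hiB
        rw [oneg_apply] at hco
        by_cases hie : Even i
        · rw [if_pos hie] at hco
          exact absurd rfl hco
        · rw [if_neg hie] at hco
          have hlt : i < n + 1 :=
            Finset.mem_range.mp (hNsupp (n+1) (Finsupp.mem_support_iff.mpr hco))
          have hne : i ≠ n := by
            intro hceq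
            subst hceq
            have : Even i := by
              by_contra hci
              exact hpar (Nat.even_add_one.mpr hci)
            exact hie this
          omega
  obtain ⟨h, hhidem, hhxh, hhoxo⟩ := grading xx hxs hx0
  set M1 : Module.End F (ℕ →₀ F) := N - xx with hM1def
  have hgo : (gP : Module.End F (ℕ →₀ F)) * (1 - gP) = 0 := by
    rw [mul_sub', mul_one, gP_idem]; abel
  have hog : ((1 - gP : Module.End F (ℕ →₀ F))) * gP = 0 := by
    rw [sub_mul', one_mul, gP_idem]; abel
  have t1 : (gP : Module.End F (ℕ →₀ F)) * (gP * N * gP) * gP = gP * N * gP := by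
    rw [← mul_assoc gP (gP * N) gP, ← mul_assoc gP gP N, gP_idem,
      mul_assoc (gP * N) gP gP, gP_idem]
  have t2 : (gP : Module.End F (ℕ →₀ F)) * ((1 - gP) * N * (1 - gP)) * gP = 0 := by
    rw [← mul_assoc gP ((1 - gP) * N) (1 - gP), ← mul_assoc gP (1 - gP) N, hgo,
      zero_mul, zero_mul, zero_mul]
  have t3 : (gP : Module.End F (ℕ →₀ F)) * xx * gP = gP * N * gP := by
    rw [hxxdef, mul_add', add_mul', mul_add', add_mul', t1, t2, gSg]
    abel
  have hgM1g : (gP : Module.End F (ℕ →₀ F)) * M1 * gP = 0 := by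
    rw [hM1def, mul_sub', sub_mul', t3]
    abel
  have s1 : ((1 - gP : Module.End F (ℕ →₀ F))) * ((1 - gP) * N * (1 - gP)) * (1 - gP)
      = (1 - gP) * N * (1 - gP) := by
    rw [← mul_assoc (1 - gP) ((1 - gP) * N) (1 - gP), ← mul_assoc (1 - gP) (1 - gP) N,
      one_sub_idem gP_idem, mul_assoc ((1 - gP) * N) (1 - gP) (1 - gP),
      one_sub_idem gP_idem]
  have s2 : ((1 - gP : Module.End F (ℕ →₀ F))) * (gP * N * gP) * (1 - gP) = 0 := by
    rw [← mul_assoc (1 - gP) (gP * N) gP, ← mul_assoc (1 - gP) gP N, hog,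
      zero_mul, zero_mul, zero_mul]
  have s3 : ((1 - gP : Module.End F (ℕ →₀ F))) * xx * (1 - gP)
      = (1 - gP) * N * (1 - gP) := by
    rw [hxxdef, mul_add', add_mul', mul_add', add_mul', s2, s1, oSo]
    abel
  have hoM1o : ((1 - gP : Module.End F (ℕ →₀ F))) * M1 * (1 - gP) = 0 := by
    have e : ((1 - gP : Module.End F (ℕ →₀ F))) * M1 * (1 - gP)
        = (1 - gP) * N * (1 - gP) - (1 - gP) * xx * (1 - gP) := by
      rw [hM1def, mul_sub' (1 - gP) N xx,
        sub_mul' ((1 - gP) * N) ((1 - gP) * xx) (1 - gP)]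
    rw [e, s3]
    abel
  refine ⟨cornerP gP M1, cornerP (1 - gP) M1, cornerP h xx, cornerP (1 - h) xx,
    cornerP_idem M1 gP_idem, cornerP_idem M1 (one_sub_idem gP_idem),
    cornerP_idem xx hhidem, cornerP_idem xx (one_sub_idem hhidem), ?_⟩
  have hs1 : cornerP gP M1 + cornerP (1 - gP) M1 = 1 + M1 :=
    cornerP_sum M1 gP_idem hgM1g hoM1o
  have hs2 : cornerP h xx + cornerP (1 - h) xx = 1 + xx :=
    cornerP_sum xx hhidem hhxh hhoxo
  have hsplit : cornerP gP M1 + cornerP (1 - gP) M1 + cornerP h xx + cornerP (1 - h) xx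
      = (1 + M1) + (1 + xx) := by
    rw [← hs1, ← hs2]
    abel
  rw [hsplit, hM1def, hNdef, show (2 : Module.End F (ℕ →₀ F)) = 1 + 1 from
    (one_add_one_eq_two).symm]
  abel

end UT4

theorem upper_triangular_end_sum_four_kpotent {F : Type*} [Field F]
    (k : ℕ) (hk : 2 ≤ k) (ω : F) (hω : ω ^ k = 1) (hω1 : ω ≠ 1)
    (t : Module.End F (ℕ →₀ F))
    (hupper : ∀ i j : ℕ, j < i → t (Finsupp.single j 1) i = 0)
    (hdiag : ∀ n : ℕ, t (Finsupp.single n 1) n = 2 * ω) :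
    ∃ E : Fin 4 → Module.End F (ℕ →₀ F),
      (∀ i, E i ^ (k + 1) = E i) ∧ t = ∑ i, E i := by
  have hω0 : ω ≠ 0 := by
    intro h
    rw [h, zero_pow (by omega : k ≠ 0)] at hω
    exact zero_ne_one hω
  set u : Module.End F (ℕ →₀ F) := ω⁻¹ • t with hudef
  have hu : ∀ j i : ℕ, j ≤ i → ((u - 2) (Finsupp.single j 1)) i = 0 := by
    intro j i hji
    have happ : ((u - 2 : Module.End F (ℕ →₀ F)) (Finsupp.single j 1))
        = ω⁻¹ • (t (Finsupp.single j 1))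
          - (Finsupp.single j 1 + Finsupp.single j 1) := by
      rw [LinearMap.sub_apply, hudef, LinearMap.smul_apply,
        show ((2 : Module.End F (ℕ →₀ F))) = 1 + 1 from (one_add_one_eq_two).symm,
        LinearMap.add_apply, Module.End.one_apply]
    rw [happ, Finsupp.sub_apply, Finsupp.add_apply, Finsupp.smul_apply, smul_eq_mul]
    rcases eq_or_lt_of_le hji with rfl | hlt
    · rw [hdiag j, Finsupp.single_eq_same, mul_comm (2:F) ω, ← mul_assoc,
        inv_mul_cancel₀ hω0, one_mul]
      norm_num
    · rw [hupper i j hlt, Finsupp.single_eq_of_ne (by omega : i ≠ j), mul_zero]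
      norm_num
  obtain ⟨P₁, P₂, P₃, P₄, h1, h2, h3, h4, hsum⟩ := UT4.sum_four u hu
  have hωk : ω ^ (k + 1) = ω := by rw [pow_succ, hω, one_mul]
  refine ⟨![ω • P₁, ω • P₂, ω • P₃, ω • P₄], ?_, ?_⟩
  · intro i
    fin_cases i
    · show (ω • P₁) ^ (k+1) = ω • P₁
      rw [smul_pow, UT4.idem_pow h1 k, hωk]
    · show (ω • P₂) ^ (k+1) = ω • P₂
      rw [smul_pow, UT4.idem_pow h2 k, hωk]
    · show (ω • P₃) ^ (k+1) = ω • P₃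
      rw [smul_pow, UT4.idem_pow h3 k, hωk]
    · show (ω • P₄) ^ (k+1) = ω • P₄
      rw [smul_pow, UT4.idem_pow h4 k, hωk]
  · rw [Fin.sum_univ_four]
    show t = ω • P₁ + ω • P₂ + ω • P₃ + ω • P₄
    rw [← smul_add, ← smul_add, ← smul_add, hsum, hudef, smul_smul,
      mul_inv_cancel₀ hω0, one_smul]
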